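/- Under the conditions of the prior-grid sandwich (σ² + ‖θ‖²/T ≤ σ_P² ≤ e^{1/T}(σ² + ‖θ‖²/T)), the Gaussian KL divergence satisfies KL(N(θ,σ²I_T) ‖ N(0,σ_P²I_T)) ≤ (1/2)[1 + T·log(1 + ‖θ‖²/(Tσ²))]. -/

import Mathlib

/-- Plugging the sandwiched prior variance
`σ² + ‖θ‖²/T ≤ σ_P² ≤ e^{1/T}(σ² + ‖θ‖²/T)` into the Gaussian KL formula
`KL = (1/2)[(Tσ² + ‖θ‖²)/σ_P² - T + T log(σ_P²/σ²)]` yields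
`KL ≤ (1/2)[1 + T log(1 + ‖θ‖²/(Tσ²))]`. -/
theorem kl_sandwiched_prior_bound
    (T : ℕ) (hT : 0 < T) (θ : EuclideanSpace ℝ (Fin T)) (σ σP2 : ℝ)
    (hσ : 0 < σ)
    (h1 : σ ^ 2 + ‖θ‖ ^ 2 / T ≤ σP2)
    (h2 : σP2 ≤ Real.exp (1 / T) * (σ ^ 2 + ‖θ‖ ^ 2 / T)) :
    (1 / 2) * (((T : ℝ) * σ ^ 2 + ‖θ‖ ^ 2) / σP2 - T +
        T * Real.log (σP2 / σ ^ 2)) ≤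
      (1 / 2) * (1 + T * Real.log (1 + ‖θ‖ ^ 2 / (T * σ ^ 2))) := by
  have hT' : (0:ℝ) < T := Nat.cast_pos.mpr hT
  have hσ2 : (0:ℝ) < σ ^ 2 := by positivity
  have hA : (0:ℝ) < σ ^ 2 + ‖θ‖ ^ 2 / T := by positivity
  have hP : (0:ℝ) < σP2 := lt_of_lt_of_le hA h1
  -- first term bound
  have hfrac : ((T : ℝ) * σ ^ 2 + ‖θ‖ ^ 2) / σP2 ≤ T := by
    rw [div_le_iff₀ hP]
    have : (T : ℝ) * σ ^ 2 + ‖θ‖ ^ 2 = T * (σ ^ 2 + ‖θ‖ ^ 2 / T) := by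
      field_simp
    rw [this]
    exact mul_le_mul_of_nonneg_left h1 hT'.le
  -- log bound
  have hAeq : (σ ^ 2 + ‖θ‖ ^ 2 / T) / σ ^ 2 = 1 + ‖θ‖ ^ 2 / (T * σ ^ 2) := by
    field_simp
  have hlog : Real.log (σP2 / σ ^ 2) ≤
      1 / T + Real.log (1 + ‖θ‖ ^ 2 / (T * σ ^ 2)) := by
    have h3 : σP2 / σ ^ 2 ≤ Real.exp (1 / T) * ((σ ^ 2 + ‖θ‖ ^ 2 / T) / σ ^ 2) := by
      rw [← mul_div_assoc]
      exact div_le_div_of_nonneg_right h2 hσ2.le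
    calc Real.log (σP2 / σ ^ 2)
        ≤ Real.log (Real.exp (1 / T) * ((σ ^ 2 + ‖θ‖ ^ 2 / T) / σ ^ 2)) :=
          Real.log_le_log (by positivity) h3
      _ = 1 / T + Real.log (1 + ‖θ‖ ^ 2 / (T * σ ^ 2)) := by
          rw [Real.log_mul (Real.exp_ne_zero _) (by positivity), Real.log_exp, hAeq]
  have hmul : (T : ℝ) * Real.log (σP2 / σ ^ 2) ≤
      1 + T * Real.log (1 + ‖θ‖ ^ 2 / (T * σ ^ 2)) := by
    calc (T : ℝ) * Real.log (σP2 / σ ^ 2)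
        ≤ T * (1 / T + Real.log (1 + ‖θ‖ ^ 2 / (T * σ ^ 2))) :=
          mul_le_mul_of_nonneg_left hlog hT'.le
      _ = 1 + T * Real.log (1 + ‖θ‖ ^ 2 / (T * σ ^ 2)) := by
          field_simp
  nlinarith [hfrac, hmul]
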